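/- Let α, ε > 0, δ ≥ 0, T > 0. Let H : [0,T] → ℝ and G : [0,T] → ℝ be functions with H differentiable, and suppose H'(t) ≥ −α H(t) + (1/ε)G(t)² − G(t)·δ for all t ∈ [0,T], where G(t) ≥ 0. Then H(t) ≥ (H(0) + εδ²/(4α))·e^{−α t} − εδ²/(4α) for all t ∈ [0,T]; in particular, if H(0) ≥ 0 then H(t) ≥ −εδ²/(4α) for all t ∈ [0,T]. -/

import Mathlib

/-- Input-to-state safety bound justifying the robustness term `(1/ε)‖∇h‖²` in
the real-time CBF-QP safety filter: the safety value `H` along the true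
trajectory admits an exponentially decaying lower bound with ultimate bound
`−εδ²/(4α)`. -/
theorem issf_ultimate_bound
    (α ε δ T : ℝ) (hα : 0 < α) (hε : 0 < ε) (hδ : 0 ≤ δ) (hT : 0 < T)
    (H G : ℝ → ℝ)
    (hH : ∀ t ∈ Set.Icc (0 : ℝ) T, DifferentiableAt ℝ H t)
    (hG : ∀ t ∈ Set.Icc (0 : ℝ) T, G t ≥ 0)
    (hineq : ∀ t ∈ Set.Icc (0 : ℝ) T,
      deriv H t ≥ -α * H t + (1 / ε) * (G t) ^ 2 - G t * δ) :
    (∀ t ∈ Set.Icc (0 : ℝ) T,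
      H t ≥ (H 0 + ε * δ ^ 2 / (4 * α)) * Real.exp (-α * t) - ε * δ ^ 2 / (4 * α)) ∧
    (H 0 ≥ 0 → ∀ t ∈ Set.Icc (0 : ℝ) T, H t ≥ -(ε * δ ^ 2 / (4 * α))) := by
  set c : ℝ := ε * δ ^ 2 / (4 * α) with hc
  have hc0 : 0 ≤ c := by positivity
  set F : ℝ → ℝ := fun t => (H t + c) * Real.exp (α * t) with hF
  have hFd : ∀ t ∈ Set.Icc (0 : ℝ) T, HasDerivAt F
      (deriv H t * Real.exp (α * t) + (H t + c) * (α * Real.exp (α * t))) t := by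
    intro t ht
    have h1 : HasDerivAt (fun t => H t + c) (deriv H t) t :=
      ((hH t ht).hasDerivAt).add_const c
    have h2 : HasDerivAt (fun t => Real.exp (α * t)) (α * Real.exp (α * t)) t := by
      have := (Real.hasDerivAt_exp (α * t)).comp t ((hasDerivAt_id t).const_mul α)
      exact this.congr_deriv (by simp [mul_comm])
    exact h1.mul h2
  have hderiv_nonneg : ∀ t ∈ Set.Icc (0 : ℝ) T,
      0 ≤ deriv H t * Real.exp (α * t) + (H t + c) * (α * Real.exp (α * t)) := by
    intro t ht
    have hGt := hG t ht
    have hkey : deriv H t + α * H t + α * c ≥ 0 := by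
      have h1 := hineq t ht
      have hac : α * c = ε * δ ^ 2 / 4 := by
        field_simp [hc]
        rw [hc]; field_simp
      have hsq : (1 / ε) * (G t - ε * δ / 2) ^ 2 ≥ 0 := by positivity
      have hexp : (1 / ε) * (G t - ε * δ / 2) ^ 2
          = (1 / ε) * (G t) ^ 2 - G t * δ + ε * δ ^ 2 / 4 := by
        field_simp
        ring
      nlinarith [hsq, hexp, h1, hac]
    have hexp : 0 < Real.exp (α * t) := Real.exp_pos _
    calc (0:ℝ) = (deriv H t + α * H t + α * c) * Real.exp (α * t) - 
          (deriv H t + α * H t + α * c) * Real.exp (α * t) := by ring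
      _ ≤ deriv H t * Real.exp (α * t) + (H t + c) * (α * Real.exp (α * t)) := by
          nlinarith [mul_nonneg hkey hexp.le]
  have hmono : MonotoneOn F (Set.Icc 0 T) := by
    apply monotoneOn_of_deriv_nonneg (convex_Icc 0 T)
    · exact fun t ht => (hFd t ht).continuousAt.continuousWithinAt
    · intro t ht
      rw [interior_Icc] at ht
      exact (hFd t (Set.mem_Icc_of_Ioo ht)).differentiableAt.differentiableWithinAt
    · intro t ht
      rw [interior_Icc] at ht
      have ht' := Set.mem_Icc_of_Ioo ht
      rw [(hFd t ht').deriv]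
      exact hderiv_nonneg t ht'
  have main : ∀ t ∈ Set.Icc (0 : ℝ) T,
      H t ≥ (H 0 + c) * Real.exp (-α * t) - c := by
    intro t ht
    have h0 : (0:ℝ) ∈ Set.Icc (0:ℝ) T := Set.left_mem_Icc.2 hT.le
    have := hmono h0 ht ht.1
    simp only [hF, mul_zero, Real.exp_zero, mul_one] at this
    have hexp : 0 < Real.exp (α * t) := Real.exp_pos _
    have hle : (H 0 + c) * Real.exp (-α * t) ≤ H t + c := by
      rw [neg_mul, Real.exp_neg, mul_inv_le_iff₀ hexp]
      linarith [this]
    linarith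
  refine ⟨main, fun h0 t ht => ?_⟩
  have := main t ht
  have hnn : 0 ≤ (H 0 + c) * Real.exp (-α * t) :=
    mul_nonneg (by linarith) (Real.exp_pos _).le
  linarith
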